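/- Gradient descent with inexact gradient (absolute error Δ) on an L-smooth function with μ-PL condition satisfies f(x^{k+1}) - f* ≤ (1 - μ/L)^{k+1}(f(x^0) - f*) + Δ²/(2μ). -/

import Mathlib

open RealInnerProductSpace

/-- Descent lemma for functions with `L`-Lipschitz gradient. -/
lemma descent_lemma {n : ℕ} (f : EuclideanSpace ℝ (Fin n) → ℝ)
    (g : EuclideanSpace ℝ (Fin n) → EuclideanSpace ℝ (Fin n)) (L : ℝ) (hL : 0 < L)
    (hgrad : ∀ x, HasGradientAt f (g x) x)
    (hLip : ∀ x y, ‖g x - g y‖ ≤ L * ‖x - y‖) (x y : EuclideanSpace ℝ (Fin n)) :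
    f y ≤ f x + ⟪g x, y - x⟫ + L / 2 * ‖y - x‖ ^ 2 := by
  set v := y - x with hv
  set φ : ℝ → ℝ := fun t => f (x + t • v) with hφ
  have hφd : ∀ t : ℝ, HasDerivAt φ ⟪g (x + t • v), v⟫ t := by
    intro t
    have hc : HasDerivAt (fun t : ℝ => x + t • v) v t := by
      simpa using ((hasDerivAt_id t).smul_const v).const_add x
    have := ((hgrad (x + t • v)).hasFDerivAt).comp_hasDerivAt t hc
    exact (by simpa [InnerProductSpace.toDual_apply_apply] using this :
      HasDerivAt (f ∘ fun t : ℝ => x + t • v) ⟪g (x + t • v), v⟫ t)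
  set h : ℝ → ℝ := fun t => φ t - φ 0 - t * ⟪g x, v⟫ - L / 2 * ‖v‖ ^ 2 * t ^ 2 with hh
  have hhd : ∀ t : ℝ, HasDerivAt h
      (⟪g (x + t • v), v⟫ - ⟪g x, v⟫ - L / 2 * ‖v‖ ^ 2 * (2 * t)) t := by
    intro t
    have d1 : HasDerivAt (fun t : ℝ => t * ⟪g x, v⟫) ⟪g x, v⟫ t := by
      simpa using (hasDerivAt_id t).mul_const (⟪g x, v⟫ : ℝ)
    have d2 : HasDerivAt (fun t : ℝ => L / 2 * ‖v‖ ^ 2 * t ^ 2)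
        (L / 2 * ‖v‖ ^ 2 * (2 * t)) t := by
      have := (hasDerivAt_pow 2 t).const_mul (L / 2 * ‖v‖ ^ 2)
      simpa [mul_comm, mul_assoc, mul_left_comm] using this
    exact (((hφd t).sub_const (φ 0)).sub d1).sub d2
  have hderiv_nonpos : ∀ t ∈ Set.Icc (0:ℝ) 1,
      ⟪g (x + t • v), v⟫ - ⟪g x, v⟫ - L / 2 * ‖v‖ ^ 2 * (2 * t) ≤ 0 := by
    intro t ht
    have h1 : ⟪g (x + t • v), v⟫ - ⟪g x, v⟫ = ⟪g (x + t • v) - g x, v⟫ := by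
      rw [inner_sub_left]
    have h2 : ⟪g (x + t • v) - g x, v⟫ ≤ ‖g (x + t • v) - g x‖ * ‖v‖ :=
      real_inner_le_norm _ _
    have h3 : ‖g (x + t • v) - g x‖ ≤ L * (t * ‖v‖) := by
      have := hLip (x + t • v) x
      simpa [norm_smul, abs_of_nonneg ht.1] using this
    have h4 : ‖g (x + t • v) - g x‖ * ‖v‖ ≤ L * (t * ‖v‖) * ‖v‖ :=
      mul_le_mul_of_nonneg_right h3 (norm_nonneg v)
    nlinarith [norm_nonneg v]
  have hdiffh : Differentiable ℝ h := fun t => (hhd t).differentiableAt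
  have hanti : AntitoneOn h (Set.Icc (0:ℝ) 1) := by
    apply antitoneOn_of_deriv_nonpos (convex_Icc 0 1) hdiffh.continuous.continuousOn
      (fun t _ => (hdiffh t).differentiableWithinAt)
    intro t ht
    rw [(hhd t).deriv]
    exact hderiv_nonpos t (Set.mem_Icc_of_Ioo (by simpa using ht))
  have h10 : h 1 ≤ h 0 := hanti (by norm_num) (by norm_num) (by norm_num)
  have h0 : h 0 = 0 := by simp [hh]
  have h1 : φ 1 = f y := by simp [hφ, hv]
  have hφ0 : φ 0 = f x := by simp [hφ]
  rw [h0] at h10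
  simp only [hh, h1, hφ0, one_mul, one_pow, mul_one] at h10
  linarith

/-- One step of inexact gradient descent under the PL condition. -/
lemma one_step {n : ℕ} (f : EuclideanSpace ℝ (Fin n) → ℝ)
    (g gt : EuclideanSpace ℝ (Fin n) → EuclideanSpace ℝ (Fin n)) (L μ Δ fstar : ℝ)
    (hL : 0 < L) (hμ : 0 < μ) (hΔ : 0 ≤ Δ)
    (hgrad : ∀ x, HasGradientAt f (g x) x)
    (hLip : ∀ x y, ‖g x - g y‖ ≤ L * ‖x - y‖)
    (herr : ∀ x, ‖gt x - g x‖ ≤ Δ)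
    (hPL : ∀ x, f x - fstar ≤ ‖g x‖ ^ 2 / (2 * μ))
    (z : EuclideanSpace ℝ (Fin n)) :
    f (z - (1 / L) • gt z) - fstar ≤ (1 - μ / L) * (f z - fstar) + Δ ^ 2 / (2 * L) := by
  set y := z - (1 / L) • gt z with hy
  have hdesc := descent_lemma f g L hL hgrad hLip z y
  have hyz : y - z = -((1 / L) • gt z) := by rw [hy]; abel
  set e := gt z - g z with he
  have hgt : gt z = g z + e := by rw [he]; abel
  have hinner : ⟪g z, y - z⟫ = -(1 / L) * (‖g z‖ ^ 2 + ⟪g z, e⟫) := by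
    rw [hyz, inner_neg_right, real_inner_smul_right, hgt, inner_add_right,
      real_inner_self_eq_norm_sq]
    ring
  have hnorm : ‖y - z‖ ^ 2 = (1 / L) ^ 2 * (‖g z‖ ^ 2 + 2 * ⟪g z, e⟫ + ‖e‖ ^ 2) := by
    rw [hyz, norm_neg, norm_smul, mul_pow, hgt, norm_add_sq_real]
    simp [abs_of_nonneg (le_of_lt (one_div_pos.mpr hL))]
  have key : f y ≤ f z - ‖g z‖ ^ 2 / (2 * L) + ‖e‖ ^ 2 / (2 * L) := by
    rw [hinner, hnorm] at hdesc
    have : f z + -(1 / L) * (‖g z‖ ^ 2 + ⟪g z, e⟫)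
        + L / 2 * ((1 / L) ^ 2 * (‖g z‖ ^ 2 + 2 * ⟪g z, e⟫ + ‖e‖ ^ 2))
        = f z - ‖g z‖ ^ 2 / (2 * L) + ‖e‖ ^ 2 / (2 * L) := by
      field_simp
      ring
    linarith [hdesc, this.symm.le]
  have hesq : ‖e‖ ^ 2 ≤ Δ ^ 2 := by
    have := herr z
    nlinarith [norm_nonneg e]
  have hPLz : 2 * μ * (f z - fstar) ≤ ‖g z‖ ^ 2 := by
    have h := hPL z
    rw [le_div_iff₀ (by positivity : (0:ℝ) < 2 * μ)] at h
    nlinarith [h]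
  have h2 : 2 * μ * (f z - fstar) / (2 * L) ≤ ‖g z‖ ^ 2 / (2 * L) := by
    gcongr
  have h2' : 2 * μ * (f z - fstar) / (2 * L) = μ / L * (f z - fstar) := by
    field_simp
  have h3 : ‖e‖ ^ 2 / (2 * L) ≤ Δ ^ 2 / (2 * L) := by gcongr
  have hexp : (1 - μ / L) * (f z - fstar)
      = (f z - fstar) - μ / L * (f z - fstar) := by ring
  rw [hexp]
  rw [h2'] at h2
  linarith [key, h2, h3]

/-- Gradient descent with inexact gradient (absolute error `Δ`) on an
`L`-smooth function with the `μ`-PL condition satisfies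
`f(x^{k+1}) - f* ≤ (1 - μ/L)^{k+1}(f(x⁰) - f*) + Δ²/(2μ)`. -/
theorem inexact_gradient_descent_PL_rate {n : ℕ} (f : EuclideanSpace ℝ (Fin n) → ℝ)
    (g gt : EuclideanSpace ℝ (Fin n) → EuclideanSpace ℝ (Fin n)) (L μ Δ fstar : ℝ)
    (hL : 0 < L) (hμ : 0 < μ) (hμL : μ ≤ L) (hΔ : 0 ≤ Δ)
    (hgrad : ∀ x, HasGradientAt f (g x) x)
    (hLip : ∀ x y, ‖g x - g y‖ ≤ L * ‖x - y‖)
    (herr : ∀ x, ‖gt x - g x‖ ≤ Δ)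
    (hlb : ∀ x, fstar ≤ f x)
    (hPL : ∀ x, f x - fstar ≤ ‖g x‖ ^ 2 / (2 * μ))
    (x : ℕ → EuclideanSpace ℝ (Fin n))
    (hstep : ∀ k, x (k + 1) = x k - (1 / L) • gt (x k)) :
    ∀ k, f (x (k + 1)) - fstar
      ≤ (1 - μ / L) ^ (k + 1) * (f (x 0) - fstar) + Δ ^ 2 / (2 * μ) := by
  have hr0 : 0 ≤ 1 - μ / L := by
    have : μ / L ≤ 1 := (div_le_one hL).mpr hμL
    linarith
  have step : ∀ k, f (x (k + 1)) - fstar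
      ≤ (1 - μ / L) * (f (x k) - fstar) + Δ ^ 2 / (2 * L) := by
    intro k
    rw [hstep k]
    exact one_step f g gt L μ Δ fstar hL hμ hΔ hgrad hLip herr hPL (x k)
  have main : ∀ k, f (x k) - fstar
      ≤ (1 - μ / L) ^ k * (f (x 0) - fstar) + Δ ^ 2 / (2 * μ) := by
    intro k
    induction k with
    | zero => simp; positivity
    | succ k ih =>
      have h1 := step k
      have h2 : (1 - μ / L) * (f (x k) - fstar)
          ≤ (1 - μ / L) * ((1 - μ / L) ^ k * (f (x 0) - fstar) + Δ ^ 2 / (2 * μ)) :=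
        mul_le_mul_of_nonneg_left ih hr0
      have h3 : (1 - μ / L) * (Δ ^ 2 / (2 * μ)) + Δ ^ 2 / (2 * L) = Δ ^ 2 / (2 * μ) := by
        field_simp
        ring
      calc f (x (k + 1)) - fstar ≤ (1 - μ / L) * (f (x k) - fstar) + Δ ^ 2 / (2 * L) := h1
      _ ≤ (1 - μ / L) * ((1 - μ / L) ^ k * (f (x 0) - fstar) + Δ ^ 2 / (2 * μ))
            + Δ ^ 2 / (2 * L) := by linarith
      _ = (1 - μ / L) ^ (k + 1) * (f (x 0) - fstar)
            + ((1 - μ / L) * (Δ ^ 2 / (2 * μ)) + Δ ^ 2 / (2 * L)) := by ring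
      _ = (1 - μ / L) ^ (k + 1) * (f (x 0) - fstar) + Δ ^ 2 / (2 * μ) := by rw [h3]
  intro k
  exact main (k + 1)
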